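/- arXiv:1606.03049 — 2 statements merged into one kernel-verified Lean document; each statement's English description precedes it below -/
import Mathlib

section
/- Let k ≥ 1 be an integer and let H ⊆ ℤ^k ∖ {0}. Then γ(H) ≤ δ(H). -/
/-- Distance from a real number to the nearest integer. -/
noncomputable def nearestIntDist (x : ℝ) : ℝ := |x - round x|

open Real Finset


lemma hasSum_cos_sq {x : ℝ} (hx : x ∈ Set.Icc (0:ℝ) 1) :
    HasSum (fun n : ℕ => 1 / (n : ℝ)^2 * Real.cos (2*π*n*x)) (π^2 * (x^2 - x + 1/6)) := by
  have h := hasSum_one_div_nat_pow_mul_cos (k := 1) one_ne_zero hx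
  have hb : (Polynomial.map (algebraMap ℚ ℝ) (Polynomial.bernoulli 2)).eval x
      = x^2 - x + 1/6 := by
    simp [Polynomial.bernoulli, Finset.sum_range_succ, bernoulli_zero, bernoulli_one,
      bernoulli, bernoulli'_two, Polynomial.eval_monomial]
    ring
  rw [show (2*1 : ℕ) = 2 by norm_num, hb] at h
  convert h using 2 with n
  · norm_num [Nat.factorial]; ring

lemma kernel_hasSum_zero {g θ : ℝ} (hg : 0 < g) (hlo : g ≤ Int.fract θ)
    (hhi : Int.fract θ ≤ 1 - g) :
    HasSum (fun n : ℕ =>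
      (if n = 0 then g else (1 - Real.cos (2*π*n*g))/(π^2*n^2*g)) * Real.cos (2*π*n*θ)) 0 := by
  set u := Int.fract θ with hu
  have hπ : (π : ℝ) ≠ 0 := Real.pi_ne_zero
  have h1 := hasSum_cos_sq (x := u) ⟨by linarith, by linarith⟩
  have h2 := hasSum_cos_sq (x := u + g) ⟨by linarith, by linarith⟩
  have h3 := hasSum_cos_sq (x := u - g) ⟨by linarith, by linarith⟩
  have h4 := ((h1.sub ((h2.add h3).div_const 2)).div_const (π^2*g)).add (hasSum_ite_eq 0 g)
  have hval : (π ^ 2 * (u ^ 2 - u + 1 / 6) -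
        (π ^ 2 * ((u + g) ^ 2 - (u + g) + 1 / 6) + π ^ 2 * ((u - g) ^ 2 - (u - g) + 1 / 6)) / 2) /
        (π ^ 2 * g) + g = 0 := by
    field_simp
    ring
  rw [hval] at h4
  convert h4 using 1
  · rfl
  funext n
  rcases eq_or_ne n 0 with rfl | hn
  · simp
  · have hnR : (n : ℝ) ≠ 0 := Nat.cast_ne_zero.mpr hn
    have hcosθ : Real.cos (2*π*n*θ) = Real.cos (2*π*n*u) := by
      have harg : 2*π*(n:ℝ)*θ = 2*π*n*u + (n * ⌊θ⌋ : ℤ) * (2*π) := by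
        have : u = θ - ⌊θ⌋ := rfl
        push_cast
        rw [this]; ring
      rw [harg, Real.cos_add_int_mul_two_pi]
    have hpl : Real.cos (2*π*n*(u+g)) = Real.cos (2*π*n*u) * Real.cos (2*π*n*g)
        - Real.sin (2*π*n*u) * Real.sin (2*π*n*g) := by
      rw [show 2*π*(n:ℝ)*(u+g) = 2*π*n*u + 2*π*n*g by ring, Real.cos_add]
    have hmi : Real.cos (2*π*n*(u-g)) = Real.cos (2*π*n*u) * Real.cos (2*π*n*g)
        + Real.sin (2*π*n*u) * Real.sin (2*π*n*g) := by
      rw [show 2*π*(n:ℝ)*(u-g) = 2*π*n*u - 2*π*n*g by ring, Real.cos_sub]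
    simp only [if_neg hn, hcosθ, hpl, hmi]
    field_simp
    ring

lemma kernel_hasSum_one {g : ℝ} (hg : 0 < g) (hg2 : g ≤ 1/2) :
    HasSum (fun n : ℕ => if n = 0 then g else (1 - Real.cos (2*π*n*g))/(π^2*n^2*g)) 1 := by
  have hπ : (π : ℝ) ≠ 0 := Real.pi_ne_zero
  have h1 := hasSum_cos_sq (x := 0) ⟨le_refl _, zero_le_one⟩
  have h2 := hasSum_cos_sq (x := g) ⟨hg.le, by linarith⟩
  have h4 := ((h1.sub h2).div_const (π^2*g)).add (hasSum_ite_eq 0 g)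
  have hval : (π ^ 2 * ((0:ℝ) ^ 2 - 0 + 1 / 6) - π ^ 2 * (g ^ 2 - g + 1 / 6)) / (π ^ 2 * g) + g
      = 1 := by
    field_simp
    ring
  rw [hval] at h4
  convert h4 using 1
  · rfl
  funext n
  rcases eq_or_ne n 0 with rfl | hn
  · simp
  · have hnR : (n : ℝ) ≠ 0 := Nat.cast_ne_zero.mpr hn
    simp only [if_neg hn, mul_zero, Real.cos_zero, mul_one, add_zero]
    field_simp

open Complex in
lemma geom_sum_exp_zero {N : ℕ} (hN : 0 < N) {m : ℤ} (hm : ¬ (N:ℤ) ∣ m) :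
    ∑ j ∈ Finset.range N, Complex.exp (2*Real.pi*(m * j / N) * Complex.I) = 0 := by
  have hNR : (N : ℂ) ≠ 0 := Nat.cast_ne_zero.mpr hN.ne'
  set z := Complex.exp (2*Real.pi*((m:ℂ)/N) * Complex.I) with hz
  have hzN : z ^ N = 1 := by
    rw [hz, ← Complex.exp_nat_mul]
    have : (N:ℂ) * (2*Real.pi*((m:ℂ)/N) * Complex.I) = (m:ℂ) * (2*Real.pi*Complex.I) := by
      field_simp
    rw [this, Complex.exp_int_mul_two_pi_mul_I]
  have hz1 : z ≠ 1 := by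
    intro h
    rw [hz, Complex.exp_eq_one_iff] at h
    obtain ⟨n, hn⟩ := h
    apply hm
    refine ⟨n, ?_⟩
    rw [mul_comm]
    have h2πI : (2*(Real.pi:ℂ)*Complex.I) ≠ 0 := by
      simp [Complex.ext_iff, Real.pi_ne_zero, Complex.I_ne_zero]
    have : (m:ℂ) = n * N := by
      have := hn
      field_simp at this ⊢
      have hmul : 2*(Real.pi:ℂ)*((m:ℂ)) * Complex.I = (n:ℂ) * (2*Real.pi*Complex.I) * N := by
        have := congrArg (fun w => w * (N:ℂ)) hn
        field_simp at this
        linear_combination (2*(Real.pi:ℂ)*Complex.I) * this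
      have := hmul
      have hx : ((m:ℂ)) * (2*(Real.pi:ℂ)*Complex.I) = ((n:ℂ)*N) * (2*(Real.pi:ℂ)*Complex.I) := by
        linear_combination hmul
      exact (mul_right_cancel₀ h2πI hx).trans (mul_comm _ _)
    exact_mod_cast this
  have hterm : ∀ j ∈ Finset.range N,
      Complex.exp (2*Real.pi*(m * j / N) * Complex.I) = z ^ j := by
    intro j _
    rw [hz, ← Complex.exp_nat_mul]
    congr 1
    push_cast
    field_simp
  rw [Finset.sum_congr rfl hterm, geom_sum_eq hz1, hzN]
  simp

lemma cos_sum_zero {k N : ℕ} (hN : 0 < N) (h : Fin k → ℤ) (i₀ : Fin k) (hi₀ : h i₀ ≠ 0)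
    (hsmall : ∀ i, (h i).natAbs < N) :
    ∑ x ∈ Fintype.piFinset (fun _ : Fin k => Finset.range N),
      Real.cos (2*π*∑ i, (h i : ℝ) * ((x i : ℝ) / N)) = 0 := by
  have hNR : (N : ℝ) ≠ 0 := Nat.cast_ne_zero.mpr hN.ne'
  have key : ∑ x ∈ Fintype.piFinset (fun _ : Fin k => Finset.range N),
      Complex.exp (((2*π*∑ i, (h i : ℝ) * ((x i : ℝ) / N) : ℝ) : ℂ) * Complex.I) = 0 := by
    have hterm : ∀ x ∈ Fintype.piFinset (fun _ : Fin k => Finset.range N),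
        Complex.exp (((2*π*∑ i, (h i : ℝ) * ((x i : ℝ) / N) : ℝ) : ℂ) * Complex.I)
        = ∏ i, Complex.exp (2*π*((h i : ℂ) * (x i : ℂ) / N) * Complex.I) := by
      intro x _
      rw [← Complex.exp_sum]
      congr 1
      rw [← Finset.sum_mul]
      congr 1
      push_cast
      rw [Finset.mul_sum]
      congr 1
      funext i
      ring
    rw [Finset.sum_congr rfl hterm,
      Finset.sum_prod_piFinset (Finset.range N)
        (fun i (j : ℕ) => Complex.exp (2*(π:ℂ)*((h i : ℂ) * (j : ℂ) / (N:ℂ)) * Complex.I))]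
    apply Finset.prod_eq_zero (Finset.mem_univ i₀)
    have hnd : ¬ (N:ℤ) ∣ h i₀ := by
      intro hd
      rcases hd with ⟨c, hc⟩
      rcases eq_or_ne c 0 with rfl | hc0
      · simp at hc; exact hi₀ hc
      · have : (N:ℤ) ≤ |h i₀| := by
          rw [hc, abs_mul]
          calc (N:ℤ) = N * 1 := by ring
          _ ≤ |(N:ℤ)| * |c| := by
            apply mul_le_mul
            · simp
            · exact Int.one_le_abs hc0
            · norm_num
            · positivity
        have h2 := hsmall i₀
        rw [Int.abs_eq_natAbs] at this
        omega
    have hgeo := geom_sum_exp_zero hN hnd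
    rw [← hgeo]
  have : ∑ x ∈ Fintype.piFinset (fun _ : Fin k => Finset.range N),
      Real.cos (2*π*∑ i, (h i : ℝ) * ((x i : ℝ) / N))
      = (∑ x ∈ Fintype.piFinset (fun _ : Fin k => Finset.range N),
        Complex.exp (((2*π*∑ i, (h i : ℝ) * ((x i : ℝ) / N) : ℝ) : ℂ) * Complex.I)).re := by
    rw [Complex.re_sum]
    exact Finset.sum_congr rfl fun x _ => (Complex.exp_ofReal_mul_I_re _).symm
  rw [this, key, Complex.zero_re]

lemma a0_nonneg {k : ℕ} (H' : Finset (Fin k → ℤ)) (a : (Fin k → ℤ) → ℝ) (a₀ : ℝ)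
    (hne : ∀ h ∈ H', h ≠ 0)
    (hpos : ∀ x : Fin k → ℝ,
      0 ≤ a₀ + ∑ h ∈ H', a h * Real.cos (2*π*∑ i, (h i : ℝ) * x i)) :
    0 ≤ a₀ := by
  classical
  set N : ℕ := 1 + H'.sup (fun h => Finset.univ.sup fun i => (h i).natAbs) with hNdef
  have hN : 0 < N := Nat.succ_le_iff.mp (Nat.le_add_right 1 _)
  have hsmall : ∀ h ∈ H', ∀ i, (h i).natAbs < N := by
    intro h hh i
    have h1 : (h i).natAbs ≤ Finset.univ.sup fun i => (h i).natAbs :=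
      Finset.le_sup (f := fun i => (h i).natAbs) (Finset.mem_univ i)
    have h2 : (Finset.univ.sup fun i => (h i).natAbs)
        ≤ H'.sup (fun h => Finset.univ.sup fun i => (h i).natAbs) :=
      Finset.le_sup (f := fun h => Finset.univ.sup fun i => (h i).natAbs) hh
    have h3 := h1.trans h2
    have : (h i).natAbs < 1 + H'.sup (fun h => Finset.univ.sup fun i => (h i).natAbs) :=
      Nat.lt_one_add_iff.mpr h3
    rwa [← hNdef] at this
  set P := Fintype.piFinset (fun _ : Fin k => Finset.range N) with hP
  have hS : 0 ≤ ∑ x ∈ P, (a₀ + ∑ h ∈ H', a h * Real.cos (2*π*∑ i, (h i : ℝ) * ((x i : ℝ)/N))) :=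
    Finset.sum_nonneg fun x _ => hpos (fun i => (x i : ℝ)/N)
  have hsplit : ∑ x ∈ P, (a₀ + ∑ h ∈ H', a h * Real.cos (2*π*∑ i, (h i : ℝ) * ((x i : ℝ)/N)))
      = (P.card : ℝ) * a₀ := by
    rw [Finset.sum_add_distrib, Finset.sum_const, nsmul_eq_mul]
    rw [Finset.sum_comm]
    have hz : ∀ h ∈ H',
        ∑ x ∈ P, a h * Real.cos (2*π*∑ i, (h i : ℝ) * ((x i : ℝ)/N)) = 0 := by
      intro h hh
      rw [← Finset.mul_sum]
      obtain ⟨i₀, hi₀⟩ := Function.ne_iff.mp (hne h hh)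
      rw [hP, cos_sum_zero hN h i₀ (by simpa using hi₀) (hsmall h hh), mul_zero]
    rw [Finset.sum_congr rfl hz, Finset.sum_const, smul_zero, add_zero]
  rw [hsplit] at hS
  have hcard : (0:ℝ) < P.card := by
    rw [hP]
    simp only [Fintype.card_piFinset]
    norm_num
    positivity
  by_contra hc
  push_neg at hc
  nlinarith

/-- Let `k ≥ 1` and `H ⊆ ℤ^k ∖ {0}`. Then `γ(H) ≤ δ(H)`, where
`δ(H)` is the infimum of constant terms `a₀` of nonnegative trigonometric
polynomials `T(x) = a₀ + Σ_{h ∈ H'} a_h cos(2π h·x)` (with `H'` a finite subset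
of `H`) normalized by `T(0) = 1`, and
`γ(H) = sup_{ξ ∈ ℝ^k} inf_{h ∈ H} ‖h·ξ‖`. -/
theorem stmt_0 (k : ℕ) (hk : 1 ≤ k) (H : Set (Fin k → ℤ))
    (hH : (0 : Fin k → ℤ) ∉ H) :
    sSup {g : ℝ | ∃ ξ : Fin k → ℝ,
        g = sInf {t : ℝ | ∃ h ∈ H, t = nearestIntDist (∑ i, (h i : ℝ) * ξ i)}} ≤
    sInf {a₀ : ℝ | ∃ (H' : Finset (Fin k → ℤ)) (a : (Fin k → ℤ) → ℝ),
        ↑H' ⊆ H ∧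
        (∀ x : Fin k → ℝ,
          0 ≤ a₀ + ∑ h ∈ H', a h * Real.cos (2 * Real.pi * ∑ i, (h i : ℝ) * x i)) ∧
        a₀ + ∑ h ∈ H', a h = 1} := by
  classical
  have hδne : {a₀ : ℝ | ∃ (H' : Finset (Fin k → ℤ)) (a : (Fin k → ℤ) → ℝ),
      ↑H' ⊆ H ∧
      (∀ x : Fin k → ℝ,
        0 ≤ a₀ + ∑ h ∈ H', a h * Real.cos (2 * Real.pi * ∑ i, (h i : ℝ) * x i)) ∧
      a₀ + ∑ h ∈ H', a h = 1}.Nonempty := by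
    refine ⟨1, ∅, fun _ => 0, ?_, ?_, ?_⟩
    · simp
    · intro x; simp
    · simp
  -- every element of the δ-set dominates every element of the γ-set
  have hcore : ∀ b ∈ {a₀ : ℝ | ∃ (H' : Finset (Fin k → ℤ)) (a : (Fin k → ℤ) → ℝ),
      ↑H' ⊆ H ∧
      (∀ x : Fin k → ℝ,
        0 ≤ a₀ + ∑ h ∈ H', a h * Real.cos (2 * Real.pi * ∑ i, (h i : ℝ) * x i)) ∧
      a₀ + ∑ h ∈ H', a h = 1}, ∀ ξ : Fin k → ℝ,
      sInf {t : ℝ | ∃ h ∈ H, t = nearestIntDist (∑ i, (h i : ℝ) * ξ i)} ≤ b := by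
    rintro b ⟨H', a, hsub, hpos, hnorm⟩ ξ
    have hne0 : ∀ h ∈ H', h ≠ 0 := fun h hh he => hH (he ▸ hsub hh)
    have hb0 : 0 ≤ b := a0_nonneg H' a b hne0 hpos
    set S := {t : ℝ | ∃ h ∈ H, t = nearestIntDist (∑ i, (h i : ℝ) * ξ i)} with hSdef
    have hbddS : BddBelow S := by
      refine ⟨0, ?_⟩
      rintro t ⟨h, _, rfl⟩
      exact abs_nonneg _
    by_cases hSne : S.Nonempty
    · set g := sInf S with hgdef
      have hg0 : 0 ≤ g := le_csInf hSne (by rintro t ⟨h, _, rfl⟩; exact abs_nonneg _)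
      rcases eq_or_lt_of_le hg0 with heq | hgpos
      · exact le_trans heq.symm.le hb0
      · -- the kernel argument
        set θ : (Fin k → ℤ) → ℝ := fun h => ∑ i, (h i : ℝ) * ξ i with hθdef
        have hghalf : g ≤ 1/2 := by
          obtain ⟨t0, ht0⟩ := hSne
          refine le_trans (csInf_le hbddS ht0) ?_
          obtain ⟨h, _, rfl⟩ := ht0
          exact abs_sub_round _
        have hfr : ∀ h ∈ H', g ≤ Int.fract (θ h) ∧ Int.fract (θ h) ≤ 1 - g := by
          intro h hh
          have hmin : g ≤ nearestIntDist (θ h) := csInf_le hbddS ⟨h, hsub hh, rfl⟩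
          rw [nearestIntDist, abs_sub_round_eq_min, le_min_iff] at hmin
          exact ⟨hmin.1, by linarith [hmin.2]⟩
        set w : ℕ → ℝ := fun n =>
          if n = 0 then g else (1 - Real.cos (2*π*n*g))/(π^2*n^2*g) with hwdef
        have hw1 : HasSum w 1 := kernel_hasSum_one hgpos hghalf
        have hwh : ∀ h ∈ H', HasSum (fun n => w n * Real.cos (2*π*n*θ h)) 0 := fun h hh =>
          kernel_hasSum_zero hgpos (hfr h hh).1 (hfr h hh).2
        have hcomb : HasSum
            (fun n => w n * (b + ∑ h ∈ H', a h * Real.cos (2*π*n*θ h))) b := by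
          have h1 := (hw1.mul_right b).add
            (hasSum_sum (f := fun h n => a h * (w n * Real.cos (2*π*n*θ h)))
              (fun h (hh : h ∈ H') => (hwh h hh).mul_left (a h)))
          have h2 : (1 * b + ∑ h ∈ H', a h * 0 : ℝ) = b := by simp
          rw [h2] at h1
          convert h1 using 1
          · rfl
          funext n
          rw [mul_add, Finset.mul_sum]
          congr 1
          exact Finset.sum_congr rfl fun h _ => by ring
        have hterm0 : w 0 * (b + ∑ h ∈ H', a h * Real.cos (2*π*(0:ℕ)*θ h)) = g := by
          have h0 : ∀ h ∈ H', a h * Real.cos (2*π*(0:ℕ)*θ h) = a h := by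
            intro h _
            norm_num
          rw [Finset.sum_congr rfl h0, hnorm, mul_one]
          simp [hwdef]
        have hkeyarg : ∀ (n : ℕ) (h : Fin k → ℤ),
            (2*π*(n:ℝ)*θ h) = 2*π*∑ i, (h i : ℝ)*((n:ℝ)*ξ i) := by
          intro n h
          simp only [hθdef]
          simp only [Finset.mul_sum]
          exact Finset.sum_congr rfl fun i _ => by ring
        have hnonneg : ∀ n : ℕ, n ≠ 0 →
            0 ≤ w n * (b + ∑ h ∈ H', a h * Real.cos (2*π*n*θ h)) := by
          intro n hn
          apply mul_nonneg
          · rw [hwdef]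
            simp only [if_neg hn]
            apply div_nonneg
            · nlinarith [Real.cos_le_one (2*π*n*g)]
            · have : (0:ℝ) < n := by
                exact_mod_cast Nat.pos_of_ne_zero hn
              positivity
          · have hp := hpos (fun i => (n:ℝ) * ξ i)
            have he : b + ∑ h ∈ H', a h * Real.cos (2*π*(n:ℝ)*θ h)
                = b + ∑ h ∈ H', a h * Real.cos (2 * π * ∑ i, (h i : ℝ) * ((n:ℝ) * ξ i)) := by
              congr 1
              refine Finset.sum_congr rfl fun h _ => ?_
              rw [hkeyarg n h]
            rw [he]
            exact hp
        have hle := le_hasSum hcomb 0 (fun j hj => hnonneg j hj)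
        rw [hterm0] at hle
        exact hle
    · rw [Set.not_nonempty_iff_eq_empty] at hSne
      rw [hSne, Real.sInf_empty]
      exact hb0
  apply Real.sSup_le
  · rintro x ⟨ξ, rfl⟩
    exact le_csInf hδne fun b hb => hcore b hb ξ
  · refine le_csInf hδne ?_
    rintro b ⟨H', a, hsub, hpos, hnorm⟩
    exact a0_nonneg H' a b (fun h hh he => hH (he ▸ hsub hh)) hpos
end

section
/- Let k ≥ 1 be an integer and let H ⊆ ℤ^k ∖ {0}. If δ(H) = 0, then H is a Heilbronn set; that is, for every ξ ∈ ℝ^k and every ε > 0 there exists h ∈ H with ‖h·ξ‖ < ε. -/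
open Real

lemma bern2 : (bernoulli 2 : ℚ) = 1/6 := by
  rw [bernoulli_eq_bernoulli'_of_ne_one (by norm_num), bernoulli'_two]

lemma cosSum {x : ℝ} (hx : x ∈ Set.Icc (0:ℝ) 1) :
    HasSum (fun n : ℕ => 1 / (n : ℝ)^2 * Real.cos (2 * π * n * x))
      (π ^ 2 * (x ^ 2 - x + 1/6)) := by
  have h := hasSum_one_div_nat_pow_mul_cos (k := 1) one_ne_zero hx
  have hb : (Polynomial.map (algebraMap ℚ ℝ) (Polynomial.bernoulli 2)).eval x
      = x ^ 2 - x + 1 / 6 := by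
    simp [Polynomial.bernoulli, Finset.sum_range_succ, bernoulli_zero, bernoulli_one,
      Polynomial.eval_monomial, bern2]
    ring
  norm_num only [show 2*1 = 2 from rfl] at h
  rw [hb] at h
  convert h using 2 with n
  push_cast
  ring

-- periodized version
lemma cosSumFract (x : ℝ) :
    HasSum (fun n : ℕ => 1 / (n : ℝ)^2 * Real.cos (2 * π * n * x))
      (π ^ 2 * ((Int.fract x) ^ 2 - Int.fract x + 1/6)) := by
  have h := cosSum (x := Int.fract x)
    ⟨Int.fract_nonneg x, (Int.fract_lt_one x).le⟩
  convert h using 2 with n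
  have : 2 * π * n * x = 2 * π * n * Int.fract x + (n * ⌊x⌋ : ℤ) * (2 * π) := by
    rw [Int.fract]
    push_cast
    ring
  rw [this, Real.cos_add_int_mul_two_pi]

noncomputable def gw (e : ℝ) (n : ℕ) : ℝ := Real.sin (π * n * e) ^ 2 / (π * n) ^ 2

lemma gw_nonneg (e : ℝ) (n : ℕ) : 0 ≤ gw e n := by
  unfold gw; positivity

lemma gwSum {e : ℝ} (he0 : 0 < e) (he1 : e ≤ 1/3) :
    HasSum (fun n : ℕ => gw e n) ((e - e^2)/2) := by
  have h0 := cosSumFract 0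
  have h1 := cosSumFract e
  have combo := (h0.mul_left (1/(2*π^2))).sub (h1.mul_left (1/(2*π^2)))
  have hfe : Int.fract e = e := Int.fract_eq_self.mpr ⟨he0.le, by linarith⟩
  have hf0 : Int.fract (0:ℝ) = 0 := Int.fract_zero
  rw [hfe, hf0] at combo
  have hfun : (fun n : ℕ => gw e n) = fun n : ℕ =>
      1/(2*π^2) * (1 / (n : ℝ)^2 * Real.cos (2 * π * n * 0))
      - 1/(2*π^2) * (1 / (n : ℝ)^2 * Real.cos (2 * π * n * e)) := by
    funext n
    rcases n with _ | m
    · simp [gw]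
    · set n : ℕ := m + 1
      have hn : (n : ℝ) ≠ 0 := by positivity
      have hs : Real.sin (π * n * e) ^ 2 = 1/2 - Real.cos (2 * π * n * e) / 2 := by
        rw [show 2 * π * n * e = 2 * (π * n * e) by ring, Real.sin_sq_eq_half_sub]
      unfold gw
      rw [hs, mul_zero, Real.cos_zero]
      have hπ : π ≠ 0 := Real.pi_ne_zero
      field_simp
      all_goals tauto
  rw [hfun]
  convert combo using 1
  · rfl
  have hπ : π ≠ 0 := Real.pi_ne_zero
  field_simp
  ring

lemma gwCosSum {e lam : ℝ} (he0 : 0 < e) (he1 : e ≤ 1/3)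
    (hy1 : e ≤ Int.fract lam) (hy2 : Int.fract lam ≤ 1 - e) :
    HasSum (fun n : ℕ => gw e n * Real.cos (2 * π * n * lam)) (-(e^2)/2) := by
  have h0 := cosSumFract lam
  have h1 := cosSumFract (lam + e)
  have h2 := cosSumFract (lam - e)
  have combo := (h0.mul_left (1/(2*π^2))).sub
    ((h1.mul_left (1/(4*π^2))).add (h2.mul_left (1/(4*π^2))))
  -- fract values
  have hfl := Int.floor_add_fract lam
  have hfrlt := Int.fract_lt_one lam
  have hfp : Int.fract (lam + e) = Int.fract (Int.fract lam + e) := by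
    rw [show lam + e = (⌊lam⌋ : ℝ) + (Int.fract lam + e) by linarith, Int.fract_intCast_add]
  have hfm : Int.fract (lam - e) = Int.fract lam - e := by
    rw [show lam - e = (⌊lam⌋ : ℝ) + (Int.fract lam - e) by linarith, Int.fract_intCast_add,
      Int.fract_eq_self.mpr ⟨by linarith, by linarith⟩]
  have hBp : Int.fract (lam + e) ^ 2 - Int.fract (lam + e) + 1/6
      = (Int.fract lam + e)^2 - (Int.fract lam + e) + 1/6 := by
    rw [hfp]
    rcases lt_or_eq_of_le (show Int.fract lam + e ≤ 1 by linarith) with h | h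
    · rw [Int.fract_eq_self.mpr ⟨by linarith, h⟩]
    · rw [h, show Int.fract (1:ℝ) = 0 by norm_num [Int.fract]]
      norm_num
  have hfun : (fun n : ℕ => gw e n * Real.cos (2 * π * n * lam)) = fun n : ℕ =>
      1/(2*π^2) * (1 / (n : ℝ)^2 * Real.cos (2 * π * n * lam))
      - (1/(4*π^2) * (1 / (n : ℝ)^2 * Real.cos (2 * π * n * (lam + e)))
        + 1/(4*π^2) * (1 / (n : ℝ)^2 * Real.cos (2 * π * n * (lam - e)))) := by
    funext n
    rcases n with _ | m
    · simp [gw]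
    · set n : ℕ := m + 1
      have hn : (n : ℝ) ≠ 0 := by positivity
      have hs : Real.sin (π * n * e) ^ 2 = 1/2 - Real.cos (2 * π * n * e) / 2 := by
        rw [show 2 * π * n * e = 2 * (π * n * e) by ring, Real.sin_sq_eq_half_sub]
      have hca : Real.cos (2 * π * n * (lam + e))
          = Real.cos (2*π*n*lam) * Real.cos (2*π*n*e) - Real.sin (2*π*n*lam) * Real.sin (2*π*n*e) := by
        rw [show 2 * π * n * (lam + e) = 2*π*n*lam + 2*π*n*e by ring, Real.cos_add]
      have hcb : Real.cos (2 * π * n * (lam - e))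
          = Real.cos (2*π*n*lam) * Real.cos (2*π*n*e) + Real.sin (2*π*n*lam) * Real.sin (2*π*n*e) := by
        rw [show 2 * π * n * (lam - e) = 2*π*n*lam - 2*π*n*e by ring, Real.cos_sub]
      unfold gw
      rw [hs, hca, hcb]
      have hπ : π ≠ 0 := Real.pi_ne_zero
      field_simp
      ring_nf
      all_goals tauto
  rw [hfun]
  convert combo using 1
  · rfl
  rw [hBp, hfm]
  have hπ : π ≠ 0 := Real.pi_ne_zero
  field_simp
  ring


/-- Let `k ≥ 1` and `H ⊆ ℤ^k ∖ {0}`. If `δ(H) = 0`, then `H` is a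
Heilbronn set: for every `ξ ∈ ℝ^k` and every `ε > 0` there exists `h ∈ H` with
`‖h·ξ‖ < ε`. Here `δ(H)` is the infimum of constant terms `a₀` of nonnegative
trigonometric polynomials `T(x) = a₀ + Σ_{h ∈ H'} a_h cos(2π h·x)` (with `H'` a
finite subset of `H`) normalized by `T(0) = 1`. -/
theorem stmt_1 (k : ℕ) (hk : 1 ≤ k) (H : Set (Fin k → ℤ))
    (hH : (0 : Fin k → ℤ) ∉ H)
    (hδ : sInf {a₀ : ℝ | ∃ (H' : Finset (Fin k → ℤ)) (a : (Fin k → ℤ) → ℝ),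
        ↑H' ⊆ H ∧
        (∀ x : Fin k → ℝ,
          0 ≤ a₀ + ∑ h ∈ H', a h * Real.cos (2 * Real.pi * ∑ i, (h i : ℝ) * x i)) ∧
        a₀ + ∑ h ∈ H', a h = 1} = 0) :
    ∀ ξ : Fin k → ℝ, ∀ ε : ℝ, 0 < ε →
      ∃ h ∈ H, nearestIntDist (∑ i, (h i : ℝ) * ξ i) < ε := by
  intro ξ ε hε
  by_contra hcon
  push_neg at hcon
  set e : ℝ := min ε (1/3) with hedef
  have he0 : 0 < e := lt_min hε (by norm_num)
  have he1 : e ≤ 1/3 := min_le_right _ _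
  have heε : e ≤ ε := min_le_left _ _
  have h1S : (1:ℝ) ∈ {a₀ : ℝ | ∃ (H' : Finset (Fin k → ℤ)) (a : (Fin k → ℤ) → ℝ),
      ↑H' ⊆ H ∧
      (∀ x : Fin k → ℝ,
        0 ≤ a₀ + ∑ h ∈ H', a h * Real.cos (2 * Real.pi * ∑ i, (h i : ℝ) * x i)) ∧
      a₀ + ∑ h ∈ H', a h = 1} := by
    refine ⟨∅, fun _ => 0, by simp, fun x => by simp, by simp⟩
  obtain ⟨a₀, haS, halt⟩ := exists_lt_of_csInf_lt ⟨1, h1S⟩ (by rw [hδ]; exact he0)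
  obtain ⟨H', a, hsub, hpos, hnorm⟩ := haS
  have hfr : ∀ h ∈ H', e ≤ Int.fract (∑ i, (h i:ℝ) * ξ i)
      ∧ Int.fract (∑ i, (h i:ℝ) * ξ i) ≤ 1 - e := by
    intro h hh
    have hnd := hcon h (hsub hh)
    rw [nearestIntDist, abs_sub_round_eq_min] at hnd
    have h2 : e ≤ min (Int.fract (∑ i, (h i:ℝ) * ξ i))
        (1 - Int.fract (∑ i, (h i:ℝ) * ξ i)) := le_trans heε hnd
    constructor
    · exact le_trans h2 (min_le_left _ _)
    · linarith [le_trans h2 (min_le_right _ _)]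
  have base := (gwSum he0 he1).mul_left a₀
  have terms : ∀ h ∈ H', HasSum
      (fun n : ℕ => a h * (gw e n * Real.cos (2 * Real.pi * n * (∑ i, (h i:ℝ) * ξ i))))
      (a h * (-(e^2)/2)) :=
    fun h hh => (gwCosSum he0 he1 (hfr h hh).1 (hfr h hh).2).mul_left (a h)
  have hsumm := base.add (hasSum_sum terms)
  have hfun : (fun n : ℕ => gw e n *
        (a₀ + ∑ h ∈ H', a h * Real.cos (2 * Real.pi * ∑ i, (h i:ℝ) * ((n:ℝ) * ξ i))))
      = fun n : ℕ => a₀ * gw e n + ∑ h ∈ H',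
          a h * (gw e n * Real.cos (2 * Real.pi * n * (∑ i, (h i:ℝ) * ξ i))) := by
    funext n
    have harg : ∀ h : Fin k → ℤ,
        2 * Real.pi * ∑ i, (h i:ℝ) * ((n:ℝ) * ξ i)
          = 2 * Real.pi * n * (∑ i, (h i:ℝ) * ξ i) := by
      intro h
      have : ∑ i, (h i:ℝ) * ((n:ℝ) * ξ i) = (n:ℝ) * ∑ i, (h i:ℝ) * ξ i := by
        rw [Finset.mul_sum]
        exact Finset.sum_congr rfl (fun i _ => by ring)
      rw [this]; ring
    rw [mul_add, mul_comm (gw e n) a₀, Finset.mul_sum]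
    congr 1
    exact Finset.sum_congr rfl (fun h _ => by rw [harg h]; ring)
  rw [← hfun] at hsumm
  have hnn : (0:ℝ) ≤ a₀ * ((e - e^2)/2) + ∑ h ∈ H', a h * (-(e^2)/2) := by
    refine hasSum_le (fun n => ?_) hasSum_zero hsumm
    exact mul_nonneg (gw_nonneg e n) (hpos (fun i => (n:ℝ) * ξ i))
  rw [← Finset.sum_mul, show ∑ h ∈ H', a h = 1 - a₀ by linarith [hnorm]] at hnn
  nlinarith [he0, halt, hnn]
end
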